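/- Let S be a locally compact Hausdorff space carrying a right quasigroup structure ∘ with identity e such that ∘ : S × S → S and χ : S × S → S are continuous. Then the map Σ : S × C(S,S) → C(S,S), where C(S,S) carries the compact-open topology, defined by Σ(x,h)(y) = χ(h(x), h(y ∘ x)), is well-defined (each Σ(x,h) is a continuous self-map of S) and continuous. -/

import Mathlib

/-- For a locally compact Hausdorff right quasigroup `(S, ∘)` with identity `e` and
continuous `∘` and `χ`, the map `Σ : S × C(S,S) → C(S,S)`,
`Σ(x,h)(y) = χ(h(x), h(y∘x))`, is well-defined and continuous, where `C(S,S)` carries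
the compact-open topology. -/
theorem sigma_welldefined_continuous {S : Type*} [TopologicalSpace S]
    [LocallyCompactSpace S] [T2Space S]
    (op : S → S → S) (e : S)
    (he₁ : ∀ x, op e x = x) (he₂ : ∀ x, op x e = x)
    (hbij : ∀ y, Function.Bijective fun x => op x y)
    (chi : S → S → S) (hchi : ∀ x y, op (chi x y) x = y)
    (hopc : Continuous fun p : S × S => op p.1 p.2)
    (hchic : Continuous fun p : S × S => chi p.1 p.2) :
    ∃ Sig : S × C(S, S) → C(S, S),
      (∀ (x : S) (h : C(S, S)) (y : S), Sig (x, h) y = chi (h x) (h (op y x))) ∧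
        Continuous Sig := by
  have heval : Continuous fun p : C(S, S) × S => p.1 p.2 := continuous_eval
  refine ⟨fun p => ⟨fun y => chi (p.2 p.1) (p.2 (op y p.1)), ?_⟩, fun x h y => rfl, ?_⟩
  · exact hchic.comp ((map_continuous p.2).comp continuous_const |>.prodMk
      ((map_continuous p.2).comp (hopc.comp (continuous_id.prodMk continuous_const))))
  · apply ContinuousMap.continuous_of_continuous_uncurry
    exact hchic.comp
      ((heval.comp ((continuous_snd.comp continuous_fst).prodMk
        (continuous_fst.comp continuous_fst))).prodMk
       (heval.comp ((continuous_snd.comp continuous_fst).prodMk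
        (hopc.comp (continuous_snd.prodMk (continuous_fst.comp continuous_fst))))))
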